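/- arXiv:2410.19506 — 9 statements merged into one kernel-verified Lean document; each statement's English description precedes it below -/
import Mathlib

section
/- Let f : E → ℝ be convex, differentiable, with L-Lipschitz gradient. Then ∇f is co-coercive: for all x, y ∈ E, ⟨∇f(x) - ∇f(y), x - y⟩ ≥ (1/L)‖∇f(x) - ∇f(y)‖². -/
open scoped RealInnerProductSpace
open InnerProductSpace

section aux

variable {E : Type*} [NormedAddCommGroup E] [InnerProductSpace ℝ E]
    [FiniteDimensional ℝ E]

private lemma line_deriv (f : E → ℝ) (f' : E → E)
    (hdiff : ∀ x, HasGradientAt f (f' x) x) (x v : E) (t : ℝ) :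
    HasDerivAt (fun s : ℝ => f (x + s • v)) ⟪f' (x + t • v), v⟫ t := by
  have hc : HasDerivAt (fun s : ℝ => x + s • v) v t := by
    simpa using ((hasDerivAt_id t).smul_const v).const_add x
  have hf := (hdiff (x + t • v)).hasFDerivAt
  have := hf.comp_hasDerivAt t hc
  simpa [InnerProductSpace.toDual_apply_apply, Function.comp_def] using this

/-- Descent lemma. -/
private lemma descent (f : E → ℝ) (f' : E → E) (L : ℝ) (hL : 0 < L)
    (hdiff : ∀ x, HasGradientAt f (f' x) x)
    (hlip : ∀ x y, ‖f' x - f' y‖ ≤ L * ‖x - y‖) (x y : E) :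
    f y ≤ f x + ⟪f' x, y - x⟫ + L / 2 * ‖y - x‖ ^ 2 := by
  set v := y - x with hv
  set g : ℝ → ℝ := fun t => f (x + t • v) - t * ⟪f' x, v⟫ - L * t ^ 2 / 2 * ‖v‖ ^ 2 with hg
  have hg' : ∀ t : ℝ, HasDerivAt g (⟪f' (x + t • v) - f' x, v⟫ - L * t * ‖v‖ ^ 2) t := by
    intro t
    have h1 := line_deriv f f' hdiff x v t
    have h2 : HasDerivAt (fun t : ℝ => t * ⟪f' x, v⟫) ⟪f' x, v⟫ t := by
      simpa using (hasDerivAt_id t).mul_const ⟪f' x, v⟫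
    have h3 : HasDerivAt (fun t : ℝ => L * t ^ 2 / 2 * ‖v‖ ^ 2) (L * t * ‖v‖ ^ 2) t := by
      have : HasDerivAt (fun t : ℝ => t ^ 2) (2 * t) t := by
        simpa using hasDerivAt_pow 2 t
      have := (((this.const_mul L).div_const 2).mul_const (‖v‖ ^ 2))
      exact this.congr_deriv (by ring)
    have := (h1.sub h2).sub h3
    exact this.congr_deriv (by rw [inner_sub_left])
  have hanti : AntitoneOn g (Set.Icc 0 1) := by
    apply antitoneOn_of_deriv_nonpos (convex_Icc 0 1)
    · exact fun t _ => ((hg' t).continuousAt).continuousWithinAt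
    · exact fun t _ => ((hg' t).differentiableAt).differentiableWithinAt
    · intro t ht
      rw [interior_Icc] at ht
      rw [(hg' t).deriv]
      have hten : ⟪f' (x + t • v) - f' x, v⟫ ≤ ‖f' (x + t • v) - f' x‖ * ‖v‖ :=
        real_inner_le_norm _ _
      have hl : ‖f' (x + t • v) - f' x‖ ≤ L * (t * ‖v‖) := by
        have := hlip (x + t • v) x
        simpa [norm_smul, abs_of_pos ht.1, mul_assoc] using this
      nlinarith [norm_nonneg v, mul_le_mul_of_nonneg_right hl (norm_nonneg v), ht.1.le]
  have h01 := hanti (Set.mem_Icc.2 ⟨le_refl 0, zero_le_one⟩) (Set.mem_Icc.2 ⟨zero_le_one, le_refl 1⟩) zero_le_one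
  simp only [hg, zero_smul, add_zero, one_smul] at h01
  have hxy : x + v = y := by rw [hv]; abel
  rw [hxy] at h01
  nlinarith [h01]

/-- First-order convexity inequality. -/
private lemma convex_lb (f : E → ℝ) (f' : E → E)
    (hconv : ConvexOn ℝ Set.univ f)
    (hdiff : ∀ x, HasGradientAt f (f' x) x) (x y : E) :
    f x + ⟪f' x, y - x⟫ ≤ f y := by
  set v := y - x with hv
  have hslope : ∀ t : ℝ, t ∈ Set.Ioo (0:ℝ) 1 → (f (x + t • v) - f x) / t ≤ f y - f x := by
    intro t ht
    have hcv := hconv.2 (Set.mem_univ x) (Set.mem_univ y) (by linarith [ht.1, ht.2] : (0:ℝ) ≤ 1 - t) ht.1.le (by ring)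
    have hpt : (1 - t) • x + t • y = x + t • v := by
      rw [hv]; module
    rw [hpt] at hcv
    rw [div_le_iff₀ ht.1]
    simp only [smul_eq_mul] at hcv
    nlinarith [hcv]
  have hd := line_deriv f f' hdiff x v 0
  simp only [zero_smul, add_zero] at hd
  have htend : Filter.Tendsto (fun t : ℝ => (f (x + t • v) - f x) / t)
      (nhdsWithin 0 (Set.Ioi 0)) (nhds ⟪f' x, v⟫) := by
    have h2 := (hasDerivAt_iff_tendsto_slope.mp hd)
    have hsub : nhdsWithin (0:ℝ) (Set.Ioi 0) ≤ nhdsWithin 0 ({0}ᶜ) := by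
      apply nhdsWithin_mono
      intro t ht; exact ne_of_gt ht
    have := h2.mono_left hsub
    refine this.congr' ?_
    filter_upwards [self_mem_nhdsWithin] with t ht
    simp [slope_def_field, div_eq_inv_mul]
  have hle : ⟪f' x, v⟫ ≤ f y - f x := by
    refine le_of_tendsto htend ?_
    · filter_upwards [Ioo_mem_nhdsGT_of_mem (by norm_num : (0:ℝ) ∈ Set.Ico (0:ℝ) 1)] with t ht
      exact hslope t ht
  linarith
  
private lemma strong_lb (f : E → ℝ) (f' : E → E) (L : ℝ) (hL : 0 < L)
    (hconv : ConvexOn ℝ Set.univ f)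
    (hdiff : ∀ x, HasGradientAt f (f' x) x)
    (hlip : ∀ x y, ‖f' x - f' y‖ ≤ L * ‖x - y‖) (x y : E) :
    f x + ⟪f' x, y - x⟫ + 1 / (2 * L) * ‖f' y - f' x‖ ^ 2 ≤ f y := by
  set z : E := y - (1 / L) • (f' y - f' x) with hz
  have h1 := convex_lb f f' hconv hdiff x z
  have h2 := descent f f' L hL hdiff hlip y z
  have hzy : z - y = -((1 / L) • (f' y - f' x)) := by rw [hz]; abel
  have hzx : z - x = (y - x) - (1 / L) • (f' y - f' x) := by rw [hz]; abel
  rw [hzy] at h2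
  rw [hzx] at h1
  rw [inner_sub_right, real_inner_smul_right] at h1
  rw [inner_neg_right, real_inner_smul_right, norm_neg, norm_smul] at h2
  have hnorm : (‖(1:ℝ) / L‖ * ‖f' y - f' x‖) ^ 2 = (1 / L) ^ 2 * ‖f' y - f' x‖ ^ 2 := by
    rw [mul_pow, Real.norm_eq_abs, sq_abs]
  rw [hnorm] at h2
  have hiy : ⟪f' y, f' y - f' x⟫ - ⟪f' x, f' y - f' x⟫ = ‖f' y - f' x‖ ^ 2 := by
    rw [← inner_sub_left, real_inner_self_eq_norm_sq]
  have hLne : L ≠ 0 := ne_of_gt hL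
  have h3 : (1/L) * ⟪f' y, f' y - f' x⟫ - (1/L) * ⟪f' x, f' y - f' x⟫
      = (1/L) * ‖f' y - f' x‖ ^ 2 := by rw [← mul_sub, hiy]
  have h4 : L / 2 * ((1/L)^2 * ‖f' y - f' x‖^2) = 1/(2*L) * ‖f' y - f' x‖^2 := by
    field_simp
  have h5 : (1/L) * ‖f' y - f' x‖^2
      = 1/(2*L) * ‖f' y - f' x‖^2 + 1/(2*L) * ‖f' y - f' x‖^2 := by
    field_simp; ring
  linarith [h1, h2, h3, h4, h5]

end aux

/-- Co-coercivity of the gradient of a convex `L`-smooth function. -/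
theorem stmt_2 {E : Type*} [NormedAddCommGroup E] [InnerProductSpace ℝ E]
    [FiniteDimensional ℝ E]
    (f : E → ℝ) (f' : E → E) (L : ℝ) (hL : 0 < L)
    (hconv : ConvexOn ℝ Set.univ f)
    (hdiff : ∀ x, HasGradientAt f (f' x) x)
    (hlip : ∀ x y, ‖f' x - f' y‖ ≤ L * ‖x - y‖) :
    ∀ x y : E, ⟪f' x - f' y, x - y⟫ ≥ (1 / L) * ‖f' x - f' y‖ ^ 2 := by
  intro x y
  have h1 := strong_lb f f' L hL hconv hdiff hlip x y
  have h2 := strong_lb f f' L hL hconv hdiff hlip y x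
  have hn : ‖f' x - f' y‖ = ‖f' y - f' x‖ := by rw [norm_sub_rev]
  have hinner : ⟪f' x, y - x⟫ + ⟪f' y, x - y⟫ = -⟪f' x - f' y, x - y⟫ := by
    rw [inner_sub_left, show (y - x : E) = -(x - y) by abel, inner_neg_right]
    ring
  have h5 : 1/(2*L) * ‖f' x - f' y‖^2 + 1/(2*L) * ‖f' x - f' y‖^2
      = 1/L * ‖f' x - f' y‖^2 := by field_simp; ring
  rw [← hn] at h1
  rw [ge_iff_le]
  linarith [h1, h2, hinner, h5]
end

section
/- Let T : E → E be a 1-Lipschitz operator admitting a fixed point, let x₀ ∈ E and define xₙ₊₁ = T(xₙ). If ‖xₙ₊₁ - xₙ‖ → 0 as n → ∞, then the sequence (xₙ) converges to a fixed point of T. -/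
open Filter Topology

/-- A nonexpansive iteration with vanishing successive differences converges
to a fixed point. -/
theorem stmt_6 {E : Type*} [NormedAddCommGroup E] [InnerProductSpace ℝ E]
    [FiniteDimensional ℝ E]
    (T : E → E)
    (hT : ∀ x y : E, ‖T x - T y‖ ≤ ‖x - y‖)
    (hfix : ∃ y, T y = y)
    (x : ℕ → E)
    (hiter : ∀ n, x (n + 1) = T (x n))
    (hdiff : Tendsto (fun n => ‖x (n + 1) - x n‖) atTop (𝓝 0)) :
    ∃ z, T z = z ∧ Tendsto x atTop (𝓝 z) := by
  obtain ⟨y, hy⟩ := hfix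
  have hanti : ∀ w, T w = w → Antitone (fun n => ‖x n - w‖) := by
    intro w hw
    apply antitone_nat_of_succ_le
    intro n
    calc ‖x (n + 1) - w‖ = ‖T (x n) - T w‖ := by rw [hiter, hw]
      _ ≤ ‖x n - w‖ := hT _ _
  have hbdd : ∀ n, x n ∈ Metric.closedBall y (‖x 0 - y‖) := by
    intro n
    simp only [Metric.mem_closedBall, dist_eq_norm]
    exact hanti y hy (Nat.zero_le n)
  obtain ⟨z, -, φ, hφ, hconv⟩ :=
    (isCompact_closedBall y (‖x 0 - y‖)).tendsto_subseq hbdd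
  have hTcont : Continuous T := by
    have : LipschitzWith 1 T := by
      intro a b
      rw [edist_dist, edist_dist, dist_eq_norm, dist_eq_norm]
      simpa using ENNReal.ofReal_le_ofReal (hT a b)
    exact this.continuous
  -- the successor subsequence also converges to z
  have hdiff' : Tendsto (fun k => x (φ k + 1) - x (φ k)) atTop (𝓝 0) := by
    rw [tendsto_zero_iff_norm_tendsto_zero]
    exact hdiff.comp hφ.tendsto_atTop
  have hsucc : Tendsto (fun k => x (φ k + 1)) atTop (𝓝 z) := by
    have := hdiff'.add hconv
    simpa using this
  have hTz : T z = z := by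
    have h1 : Tendsto (fun k => T (x (φ k))) atTop (𝓝 (T z)) :=
      (hTcont.tendsto z).comp hconv
    have h2 : Tendsto (fun k => T (x (φ k))) atTop (𝓝 z) := by
      simpa only [← hiter] using hsucc
    exact tendsto_nhds_unique h1 h2
  refine ⟨z, hTz, ?_⟩
  have hantiz := hanti z hTz
  have hL : Tendsto (fun n => ‖x n - z‖) atTop (𝓝 (⨅ n, ‖x n - z‖)) :=
    tendsto_atTop_ciInf hantiz ⟨0, by rintro r ⟨n, rfl⟩; positivity⟩
  have hsub0 : Tendsto (fun k => ‖x (φ k) - z‖) atTop (𝓝 0) := by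
    rw [← tendsto_zero_iff_norm_tendsto_zero]
    simpa using hconv.sub (tendsto_const_nhds (x := z))
  have hsubL : Tendsto (fun k => ‖x (φ k) - z‖) atTop (𝓝 (⨅ n, ‖x n - z‖)) :=
    hL.comp hφ.tendsto_atTop
  have h0 : (⨅ n, ‖x n - z‖) = 0 := tendsto_nhds_unique hsubL hsub0
  rw [tendsto_iff_norm_sub_tendsto_zero]
  simpa [h0] using hL
end

section
/- Let f : E → ℝ be convex, differentiable with L-Lipschitz gradient, admitting a minimizer x*. For x₀ ∈ E define xₙ₊₁ = xₙ - (1/L)∇f(xₙ). Then for all n ≥ 1, f(xₙ) - f(x*) ≤ (L/(2n))‖x₀ - x*‖². -/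
open scoped RealInnerProductSpace

lemma gd_line_deriv {E : Type*} [NormedAddCommGroup E] [InnerProductSpace ℝ E] [CompleteSpace E]
    (f : E → ℝ) (f' : E → E) (hdiff : ∀ x, HasGradientAt f (f' x) x) (a d : E) (t : ℝ) :
    HasDerivAt (fun s : ℝ => f (a + s • d)) ⟪f' (a + t • d), d⟫ t := by
  have h1 : HasDerivAt (fun s : ℝ => a + s • d) d t := by
    simpa using ((hasDerivAt_id t).smul_const d).const_add a
  have h2 := (hdiff (a + t • d)).hasFDerivAt.comp_hasDerivAt t h1
  exact h2

lemma gd_grad_ineq {E : Type*} [NormedAddCommGroup E] [InnerProductSpace ℝ E] [CompleteSpace E]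
    (f : E → ℝ) (f' : E → E) (hconv : ConvexOn ℝ Set.univ f)
    (hdiff : ∀ x, HasGradientAt f (f' x) x) (a b : E) :
    f a + ⟪f' a, b - a⟫ ≤ f b := by
  set g : ℝ → ℝ := fun t => f (a + t • (b - a)) with hg
  have hgconv : ConvexOn ℝ Set.univ g := by
    have := hconv.comp_affineMap (AffineMap.lineMap a b)
    have heq : (f ∘ AffineMap.lineMap a b) = g := by
      funext t
      simp only [Function.comp, hg, AffineMap.lineMap_apply_module]
      congr 1
      module
    rw [heq] at this
    simpa using this
  have hd : HasDerivAt g ⟪f' a, b - a⟫ 0 := by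
    have := gd_line_deriv f f' hdiff a (b - a) 0
    simpa using this
  have hslope := hgconv.le_slope_of_hasDerivAt (Set.mem_univ 0) (Set.mem_univ 1)
    one_pos hd
  rw [slope_def_field] at hslope
  have hg0 : g 0 = f a := by simp [hg]
  have hg1 : g 1 = f b := by simp [hg]
  rw [hg0, hg1] at hslope
  simp at hslope
  linarith

lemma gd_descent {E : Type*} [NormedAddCommGroup E] [InnerProductSpace ℝ E] [CompleteSpace E]
    (f : E → ℝ) (f' : E → E) (L : ℝ) (hL : 0 < L)
    (hdiff : ∀ x, HasGradientAt f (f' x) x)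
    (hlip : ∀ x y, ‖f' x - f' y‖ ≤ L * ‖x - y‖) (a b : E) :
    f b ≤ f a + ⟪f' a, b - a⟫ + L / 2 * ‖b - a‖ ^ 2 := by
  set d : E := b - a with hd
  set φ : ℝ → ℝ := fun t => f (a + t • d) - t * ⟪f' a, d⟫ - L / 2 * t ^ 2 * ‖d‖ ^ 2 with hφ
  have hφ' : ∀ t : ℝ, HasDerivAt φ
      (⟪f' (a + t • d), d⟫ - ⟪f' a, d⟫ - L * t * ‖d‖ ^ 2) t := by
    intro t
    have h1 := gd_line_deriv f f' hdiff a d t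
    have h2 : HasDerivAt (fun s : ℝ => s * ⟪f' a, d⟫) ⟪f' a, d⟫ t := by
      simpa using (hasDerivAt_id t).mul_const (⟪f' a, d⟫)
    have h3 : HasDerivAt (fun s : ℝ => L / 2 * s ^ 2 * ‖d‖ ^ 2)
        (L * t * ‖d‖ ^ 2) t := by
      have := ((hasDerivAt_pow 2 t).const_mul (L / 2)).mul_const (‖d‖ ^ 2)
      convert this using 1
      · rfl
      · rfl
      ring
    exact (h1.sub h2).sub h3
  have hanti : AntitoneOn φ (Set.Icc 0 1) := by
    apply antitoneOn_of_deriv_nonpos (convex_Icc 0 1)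
    · exact fun t _ => (hφ' t).continuousAt.continuousWithinAt
    · exact fun t _ => (hφ' t).differentiableAt.differentiableWithinAt
    · intro t ht
      rw [interior_Icc] at ht
      rw [(hφ' t).deriv]
      have hle : ⟪f' (a + t • d) - f' a, d⟫ ≤ L * t * ‖d‖ ^ 2 := by
        calc ⟪f' (a + t • d) - f' a, d⟫ ≤ ‖f' (a + t • d) - f' a‖ * ‖d‖ :=
              real_inner_le_norm _ _
          _ ≤ (L * ‖(a + t • d) - a‖) * ‖d‖ := by
              gcongr; exact hlip _ _
          _ = L * t * ‖d‖ ^ 2 := by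
              simp [norm_smul, abs_of_nonneg ht.1.le]; ring
      rw [inner_sub_left] at hle
      linarith
  have h01 := hanti (Set.mem_Icc.mpr ⟨le_refl 0, zero_le_one⟩)
    (Set.mem_Icc.mpr ⟨zero_le_one, le_refl 1⟩) zero_le_one
  have hφ0 : φ 0 = f a := by simp [hφ]
  have hφ1 : φ 1 = f b - ⟪f' a, d⟫ - L / 2 * ‖d‖ ^ 2 := by
    simp [hφ, hd]
  rw [hφ0, hφ1] at h01
  linarith

/-- `O(1/n)` rate of gradient descent with step `1/L` for a convex `L`-smooth function. -/
theorem stmt_7 {E : Type*} [NormedAddCommGroup E] [InnerProductSpace ℝ E]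
    [FiniteDimensional ℝ E]
    (f : E → ℝ) (f' : E → E) (L : ℝ) (hL : 0 < L)
    (hconv : ConvexOn ℝ Set.univ f)
    (hdiff : ∀ x, HasGradientAt f (f' x) x)
    (hlip : ∀ x y, ‖f' x - f' y‖ ≤ L * ‖x - y‖)
    (xstar : E) (hmin : ∀ x, f xstar ≤ f x)
    (x : ℕ → E)
    (hiter : ∀ n, x (n + 1) = x n - (1 / L) • f' (x n)) :
    ∀ n : ℕ, 1 ≤ n → f (x n) - f xstar ≤ L / (2 * n) * ‖x 0 - xstar‖ ^ 2 := by
  have hL' : L ≠ 0 := hL.ne'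
  -- sufficient decrease
  have key1 : ∀ n : ℕ, f (x (n + 1)) ≤ f (x n) - 1 / (2 * L) * ‖f' (x n)‖ ^ 2 := by
    intro n
    have hdesc := gd_descent f f' L hL hdiff hlip (x n) (x (n + 1))
    have hsub : x (n + 1) - x n = -((1 / L) • f' (x n)) := by
      rw [hiter n]; abel
    rw [hsub] at hdesc
    have hin : ⟪f' (x n), -((1 / L) • f' (x n))⟫ = -(1 / L) * ‖f' (x n)‖ ^ 2 := by
      rw [inner_neg_right, real_inner_smul_right, real_inner_self_eq_norm_sq]
      ring
    have hnr : ‖-((1 / L) • f' (x n))‖ ^ 2 = (1 / L) ^ 2 * ‖f' (x n)‖ ^ 2 := by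
      rw [norm_neg, norm_smul]
      simp [abs_of_pos hL]
      ring
    rw [hin, hnr] at hdesc
    have : L / 2 * ((1 / L) ^ 2 * ‖f' (x n)‖ ^ 2) - 1 / L * ‖f' (x n)‖ ^ 2
        = -(1 / (2 * L) * ‖f' (x n)‖ ^ 2) := by field_simp; ring
    linarith [hdesc, this]
  -- per-step bound
  have key2 : ∀ n : ℕ, f (x (n + 1)) - f xstar
      ≤ L / 2 * (‖x n - xstar‖ ^ 2 - ‖x (n + 1) - xstar‖ ^ 2) := by
    intro n
    have hg := gd_grad_ineq f f' hconv hdiff (x n) xstar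
    have hg' : f (x n) - f xstar ≤ ⟪f' (x n), x n - xstar⟫ := by
      have : ⟪f' (x n), xstar - x n⟫ = -⟪f' (x n), x n - xstar⟫ := by
        rw [← inner_neg_right]; congr 1; abel
      rw [this] at hg; linarith
    have hident : ‖x (n + 1) - xstar‖ ^ 2 = ‖x n - xstar‖ ^ 2
        - 2 / L * ⟪f' (x n), x n - xstar⟫ + (1 / L) ^ 2 * ‖f' (x n)‖ ^ 2 := by
      have hsub : x (n + 1) - xstar = (x n - xstar) - (1 / L) • f' (x n) := by
        rw [hiter n]; abel
      rw [hsub, norm_sub_sq_real, real_inner_smul_right, norm_smul]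
      rw [real_inner_comm]
      simp [abs_of_pos hL]
      ring
    have h1 := key1 n
    have : ⟪f' (x n), x n - xstar⟫ - 1 / (2 * L) * ‖f' (x n)‖ ^ 2
        = L / 2 * (‖x n - xstar‖ ^ 2 - ‖x (n + 1) - xstar‖ ^ 2) := by
      rw [hident]; field_simp; ring
    linarith
  -- telescoping
  have key3 : ∀ n : ℕ, (∑ k ∈ Finset.range n, (f (x (k + 1)) - f xstar))
      ≤ L / 2 * ‖x 0 - xstar‖ ^ 2 := by
    intro n
    calc (∑ k ∈ Finset.range n, (f (x (k + 1)) - f xstar))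
        ≤ ∑ k ∈ Finset.range n,
            L / 2 * (‖x k - xstar‖ ^ 2 - ‖x (k + 1) - xstar‖ ^ 2) :=
          Finset.sum_le_sum fun k _ => key2 k
      _ = L / 2 * (‖x 0 - xstar‖ ^ 2 - ‖x n - xstar‖ ^ 2) := by
          rw [← Finset.mul_sum, Finset.sum_range_sub' (fun k => ‖x k - xstar‖ ^ 2)]
      _ ≤ L / 2 * ‖x 0 - xstar‖ ^ 2 := by nlinarith [sq_nonneg ‖x n - xstar‖]
  -- monotonicity
  have hmono : ∀ m n : ℕ, m ≤ n → f (x n) ≤ f (x m) := by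
    intro m n hmn
    induction n with
    | zero => simp_all
    | succ k ih =>
      rcases Nat.lt_or_ge m (k + 1) with h | h
      · have h1 := key1 k
        have h2 := ih (Nat.lt_succ_iff.mp h)
        have : 0 ≤ 1 / (2 * L) * ‖f' (x k)‖ ^ 2 := by positivity
        linarith
      · have : m = k + 1 := le_antisymm hmn h
        rw [this]
  intro n hn
  have hnpos : (0:ℝ) < n := by exact_mod_cast hn
  have hlow : (n : ℝ) * (f (x n) - f xstar)
      ≤ ∑ k ∈ Finset.range n, (f (x (k + 1)) - f xstar) := by
    have := Finset.card_nsmul_le_sum (Finset.range n)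
      (fun k => f (x (k + 1)) - f xstar) (f (x n) - f xstar)
      (fun k hk => by
        have hk' : k + 1 ≤ n := Finset.mem_range.mp hk
        have := hmono (k + 1) n hk'
        show f (x n) - f xstar ≤ f (x (k + 1)) - f xstar
        linarith)
    simpa [nsmul_eq_mul] using this
  have hfinal : (n : ℝ) * (f (x n) - f xstar) ≤ L / 2 * ‖x 0 - xstar‖ ^ 2 :=
    hlow.trans (key3 n)
  rw [div_mul_eq_mul_div, le_div_iff₀ (by positivity : (0:ℝ) < 2 * n)]
  nlinarith [hfinal]
end

section
/- Let f : E → ℝ be α-strongly convex and differentiable with unique minimizer x*. Then for all x ∈ E, f(x) - f(x*) ≤ (1/(2α))‖∇f(x)‖² (the Polyak–Łojasiewicz inequality). -/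
open scoped RealInnerProductSpace

private lemma strong_convex_lower {E : Type*} [NormedAddCommGroup E] [InnerProductSpace ℝ E]
    [FiniteDimensional ℝ E] (f : E → ℝ) (f' : E → E) (α : ℝ)
    (hsc : ConvexOn ℝ Set.univ (fun x => f x - α / 2 * ‖x‖ ^ 2))
    (hdiff : ∀ x, HasGradientAt f (f' x) x) (x y : E) :
    f x + ⟪f' x, y - x⟫ + α / 2 * ‖y - x‖ ^ 2 ≤ f y := by
  set v := y - x with hv
  set ψ : ℝ → ℝ := fun t => f (x + t • v) - α / 2 * ‖x + t • v‖ ^ 2 with hψ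
  -- ψ is convex
  have hψc : ConvexOn ℝ Set.univ ψ := by
    have := hsc.comp_affineMap (AffineMap.lineMap x y)
    have hpre : (AffineMap.lineMap x y : ℝ →ᵃ[ℝ] E) ⁻¹' Set.univ = Set.univ := by simp
    rw [hpre] at this
    have harg : ∀ t : ℝ, (AffineMap.lineMap x y) t = x + t • v := fun t => by
      simp [AffineMap.lineMap_apply, hv, add_comm]
    convert this using 1 <;> try rfl
    funext t
    simp [Function.comp, harg, ψ]
  -- derivative of ψ at 0
  have hline : HasDerivAt (fun t : ℝ => x + t • v) v 0 := by
    have : HasDerivAt (fun t : ℝ => t • v) ((1 : ℝ) • v) 0 :=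
      (hasDerivAt_id (0 : ℝ)).smul_const v
    simpa using this.const_add x
  have hcomp : HasDerivAt (fun t : ℝ => f (x + t • v)) ⟪f' x, v⟫ 0 := by
    have hfd : HasFDerivAt f (InnerProductSpace.toDual ℝ E (f' x)) (x + (0 : ℝ) • v) := by
      simpa using (hdiff x).hasFDerivAt
    have := hfd.comp_hasDerivAt 0 hline
    simpa [InnerProductSpace.toDual_apply_apply, Function.comp_def] using this
  have hnorm : HasDerivAt (fun t : ℝ => α / 2 * ‖x + t • v‖ ^ 2) (α * ⟪x, v⟫) 0 := by
    have hi : HasDerivAt (fun t : ℝ => ⟪x + t • v, x + t • v⟫)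
        (⟪(fun t : ℝ => x + t • v) 0, v⟫ + ⟪v, (fun t : ℝ => x + t • v) 0⟫) 0 :=
      hline.inner ℝ hline
    simp only [zero_smul, add_zero, real_inner_comm] at hi
    have := hi.const_mul (α / 2)
    have heq : (fun t : ℝ => α / 2 * ⟪x + t • v, x + t • v⟫)
        = fun t : ℝ => α / 2 * ‖x + t • v‖ ^ 2 := by
      funext t; rw [real_inner_self_eq_norm_sq]
    rw [heq] at this
    convert this using 1 <;> try rfl
    ring
  have hψd : HasDerivAt ψ (⟪f' x, v⟫ - α * ⟪x, v⟫) 0 := hcomp.sub hnorm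
  have hslope := hψc.le_slope_of_hasDerivAt (Set.mem_univ (0 : ℝ)) (Set.mem_univ (1 : ℝ))
    zero_lt_one hψd
  rw [slope_def_field] at hslope
  have h1 : ψ 1 = f y - α / 2 * ‖y‖ ^ 2 := by simp [ψ, hv]
  have h0 : ψ 0 = f x - α / 2 * ‖x‖ ^ 2 := by simp [ψ]
  rw [h1, h0] at hslope
  have hexp : ‖y‖ ^ 2 = ‖x‖ ^ 2 + 2 * ⟪x, v⟫ + ‖v‖ ^ 2 := by
    have : y = x + v := by rw [hv]; abel
    rw [this, norm_add_sq_real]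
  norm_num at hslope
  rw [hexp] at hslope
  linarith

/-- Polyak–Łojasiewicz inequality for an `α`-strongly convex differentiable function. -/
theorem stmt_8 {E : Type*} [NormedAddCommGroup E] [InnerProductSpace ℝ E]
    [FiniteDimensional ℝ E]
    (f : E → ℝ) (f' : E → E) (α : ℝ) (hα : 0 < α)
    (hsc : ConvexOn ℝ Set.univ (fun x => f x - α / 2 * ‖x‖ ^ 2))
    (hdiff : ∀ x, HasGradientAt f (f' x) x)
    (xstar : E) (hmin : ∀ x, f xstar ≤ f x) :
    ∀ x : E, f x - f xstar ≤ 1 / (2 * α) * ‖f' x‖ ^ 2 := by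
  intro x
  have key := strong_convex_lower f f' α hsc hdiff x xstar
  have hinner : -(‖f' x‖ * ‖xstar - x‖) ≤ ⟪f' x, xstar - x⟫ :=
    neg_le_of_abs_le (abs_real_inner_le_norm _ _)
  have hb : (0 : ℝ) ≤ ‖xstar - x‖ := norm_nonneg _
  have hsq : (0 : ℝ) ≤ (‖f' x‖ - α * ‖xstar - x‖) ^ 2 := sq_nonneg _
  rw [div_mul_eq_mul_div, one_mul, le_div_iff₀ (by positivity)]
  nlinarith [key, hinner, hsq, hα]
end

section
/- Let f : E → ℝ be L-smooth and α-strongly convex with minimizer x*, and define the gradient descent sequence xₙ₊₁ = xₙ - (1/L)∇f(xₙ). Then f(xₙ) - f(x*) ≤ (1 - α/L)ⁿ (f(x₀) - f(x*)) for all n. -/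
open scoped RealInnerProductSpace

section Aux

variable {E : Type*} [NormedAddCommGroup E] [InnerProductSpace ℝ E]
  [FiniteDimensional ℝ E]

/-- Derivative of `f` along a line. -/
lemma aux_line_deriv (f : E → ℝ) (f' : E → E)
    (hdiff : ∀ x, HasGradientAt f (f' x) x) (x v : E) (t : ℝ) :
    HasDerivAt (fun t : ℝ => f (x + t • v)) ⟪f' (x + t • v), v⟫ t := by
  have hc : HasDerivAt (fun t : ℝ => x + t • v) v t := by
    simpa using ((hasDerivAt_id t).smul_const v).const_add x
  have hF := (hdiff (x + t • v)).hasFDerivAt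
  have := hF.comp_hasDerivAt t hc
  simp only [InnerProductSpace.toDual_apply_apply] at this
  exact this

/-- Descent lemma: the gradient is `L`-Lipschitz implies a quadratic upper bound. -/
lemma aux_descent (f : E → ℝ) (f' : E → E) (L : ℝ)
    (hdiff : ∀ x, HasGradientAt f (f' x) x)
    (hlip : ∀ x y, ‖f' x - f' y‖ ≤ L * ‖x - y‖) (x y : E) :
    f y ≤ f x + ⟪f' x, y - x⟫ + L / 2 * ‖y - x‖ ^ 2 := by
  set v := y - x with hv
  set h : ℝ → ℝ := fun t => f (x + t • v) - t * ⟪f' x, v⟫ - L / 2 * t ^ 2 * ‖v‖ ^ 2 with hh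
  have hderiv : ∀ t : ℝ, HasDerivAt h
      (⟪f' (x + t • v), v⟫ - ⟪f' x, v⟫ - L * t * ‖v‖ ^ 2) t := by
    intro t
    have h1 := aux_line_deriv f f' hdiff x v t
    have h2 : HasDerivAt (fun t : ℝ => t * ⟪f' x, v⟫) ⟪f' x, v⟫ t := by
      simpa using (hasDerivAt_id t).mul_const ⟪f' x, v⟫
    have h3 : HasDerivAt (fun t : ℝ => L / 2 * t ^ 2 * ‖v‖ ^ 2) (L * t * ‖v‖ ^ 2) t := by
      have : HasDerivAt (fun t : ℝ => t ^ 2) (2 * t) t := by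
        simpa using hasDerivAt_pow 2 t
      have := ((this.const_mul (L / 2)).mul_const (‖v‖ ^ 2))
      exact this.congr_deriv (by ring)
    have h4 := (h1.sub h2).sub h3
    exact h4
  have hpos : ∀ t ∈ Set.Icc (0:ℝ) 1, deriv h t ≤ 0 := by
    intro t ht
    rw [(hderiv t).deriv]
    have hb : ⟪f' (x + t • v) - f' x, v⟫ ≤ L * t * ‖v‖ ^ 2 := by
      calc ⟪f' (x + t • v) - f' x, v⟫ ≤ ‖f' (x + t • v) - f' x‖ * ‖v‖ :=
            real_inner_le_norm _ _
        _ ≤ (L * ‖(x + t • v) - x‖) * ‖v‖ := by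
            gcongr; exact hlip _ _
        _ = L * (|t| * ‖v‖) * ‖v‖ := by simp [norm_smul, Real.norm_eq_abs]
        _ = L * t * ‖v‖ ^ 2 := by rw [abs_of_nonneg ht.1]; ring
    have : ⟪f' (x + t • v) - f' x, v⟫ = ⟪f' (x + t • v), v⟫ - ⟪f' x, v⟫ :=
      inner_sub_left _ _ _
    linarith [this ▸ hb]
  have hanti : AntitoneOn h (Set.Icc (0:ℝ) 1) := by
    apply antitoneOn_of_deriv_nonpos (convex_Icc 0 1)
    · exact fun t _ => ((hderiv t).differentiableAt).continuousAt.continuousWithinAt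
    · exact fun t _ => ((hderiv t).differentiableAt).differentiableWithinAt
    · intro t ht
      exact hpos t (interior_subset ht)
  have := hanti (Set.left_mem_Icc.mpr one_pos.le) (Set.right_mem_Icc.mpr one_pos.le) one_pos.le
  simp only [hh] at this
  have e1 : x + (1:ℝ) • v = y := by simp [hv]
  have e0 : x + (0:ℝ) • v = x := by simp
  rw [e1, e0] at this
  simp only [one_pow, one_mul, zero_pow, zero_mul, mul_zero, sub_zero] at this
  nlinarith [this]

/-- First-order condition for strong convexity. -/
lemma aux_sc (f : E → ℝ) (f' : E → E) (α : ℝ)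
    (hsc : ConvexOn ℝ Set.univ (fun x => f x - α / 2 * ‖x‖ ^ 2))
    (hdiff : ∀ x, HasGradientAt f (f' x) x) (x y : E) :
    f x + ⟪f' x, y - x⟫ + α / 2 * ‖y - x‖ ^ 2 ≤ f y := by
  set φ : E → ℝ := fun z => f z - α / 2 * ‖z‖ ^ 2 with hφ
  -- derivative of φ along the segment from x to y, at t = 0
  set v := y - x with hv
  set ψ : ℝ → ℝ := fun t => φ (x + t • v) with hψ
  have hψconv : ConvexOn ℝ Set.univ ψ := by
    have h0 := hsc.comp_affineMap (AffineMap.lineMap x y : ℝ →ᵃ[ℝ] E)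
    rw [Set.preimage_univ] at h0
    suffices hfun : ψ = φ ∘ (AffineMap.lineMap x y : ℝ →ᵃ[ℝ] E) by rw [hfun]; exact h0
    funext t
    simp only [hψ, hφ, Function.comp_apply, AffineMap.lineMap_apply, vsub_eq_sub,
      vadd_eq_add, hv]
    rw [add_comm x (t • (y - x))]
  have hψd : HasDerivAt ψ (⟪f' x, v⟫ - α * ⟪x, v⟫) 0 := by
    have h1 : HasDerivAt (fun t : ℝ => f (x + t • v)) ⟪f' (x + (0:ℝ) • v), v⟫ 0 :=
      aux_line_deriv f f' hdiff x v 0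
    have hc : HasDerivAt (fun t : ℝ => x + t • v) v 0 := by
      simpa using ((hasDerivAt_id (0:ℝ)).smul_const v).const_add x
    have h2 : HasDerivAt (fun t : ℝ => ‖x + t • v‖ ^ 2) (2 * ⟪x + (0:ℝ) • v, v⟫) 0 := by
      have := hc.norm_sq
      simpa [real_inner_smul_left, two_mul] using this
    have h3 := h1.sub ((h2.const_mul (α / 2)))
    simp only [zero_smul, add_zero] at h3
    exact h3.congr_deriv (by ring)
  have hslope := hψconv.le_slope_of_hasDerivAt (Set.mem_univ (0:ℝ)) (Set.mem_univ (1:ℝ))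
    one_pos hψd
  have hs : slope ψ 0 1 = ψ 1 - ψ 0 := by simp [slope_def_field]
  rw [hs] at hslope
  have e1 : ψ 1 = φ y := by simp [hψ, hv]
  have e0 : ψ 0 = φ x := by simp [hψ]
  rw [e1, e0] at hslope
  -- expand everything
  have hnorm : ‖v‖ ^ 2 = ‖y‖ ^ 2 - 2 * ⟪x, y⟫ + ‖x‖ ^ 2 := by
    rw [hv, ← real_inner_self_eq_norm_sq, ← real_inner_self_eq_norm_sq,
      ← real_inner_self_eq_norm_sq]
    simp only [inner_sub_left, inner_sub_right]
    rw [real_inner_comm y x]; ring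
  have hxv : ⟪x, v⟫ = ⟪x, y⟫ - ‖x‖ ^ 2 := by
    rw [hv, inner_sub_right, real_inner_self_eq_norm_sq]
  simp only [hφ] at hslope
  rw [hxv] at hslope
  rw [hnorm]
  linarith [hslope]

end Aux

/-- Linear convergence rate of gradient descent with step `1/L` for an
`L`-smooth, `α`-strongly convex function. -/
theorem stmt_9 {E : Type*} [NormedAddCommGroup E] [InnerProductSpace ℝ E]
    [FiniteDimensional ℝ E]
    (f : E → ℝ) (f' : E → E) (L α : ℝ) (hα : 0 < α) (hαL : α ≤ L)
    (hsc : ConvexOn ℝ Set.univ (fun x => f x - α / 2 * ‖x‖ ^ 2))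
    (hdiff : ∀ x, HasGradientAt f (f' x) x)
    (hlip : ∀ x y, ‖f' x - f' y‖ ≤ L * ‖x - y‖)
    (xstar : E) (hmin : ∀ x, f xstar ≤ f x)
    (x : ℕ → E)
    (hiter : ∀ n, x (n + 1) = x n - (1 / L) • f' (x n)) :
    ∀ n : ℕ, f (x n) - f xstar ≤ (1 - α / L) ^ n * (f (x 0) - f xstar) := by
  have hL : 0 < L := lt_of_lt_of_le hα hαL
  -- PL inequality
  have hPL : ∀ z : E, 2 * α * (f z - f xstar) ≤ ‖f' z‖ ^ 2 := by
    intro z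
    have h1 := aux_sc f f' α hsc hdiff z xstar
    have h2 : (0:ℝ) ≤ ‖f' z + α • (xstar - z)‖ ^ 2 := sq_nonneg _
    have h3 : ‖f' z + α • (xstar - z)‖ ^ 2 =
        ‖f' z‖ ^ 2 + 2 * α * ⟪f' z, xstar - z⟫ + α ^ 2 * ‖xstar - z‖ ^ 2 := by
      rw [norm_add_sq_real, real_inner_smul_right, norm_smul, Real.norm_eq_abs,
        abs_of_nonneg hα.le, mul_pow]
      ring
    rw [h3] at h2
    have h1' : ⟪f' z, xstar - z⟫ + α / 2 * ‖xstar - z‖ ^ 2 ≤ f xstar - f z := by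
      linarith [h1]
    have h1'' := mul_le_mul_of_nonneg_left h1' (by positivity : (0:ℝ) ≤ 2 * α)
    nlinarith [h2, h1'']
  -- one-step decrease
  have hstep : ∀ n : ℕ, f (x (n + 1)) - f xstar ≤ (1 - α / L) * (f (x n) - f xstar) := by
    intro n
    set z := x n with hz
    set g := f' z with hg
    have hd := aux_descent f f' L hdiff hlip z (z - (1 / L) • g)
    have he : z - (1 / L) • g - z = -((1 / L) • g) := by abel
    rw [he] at hd
    have hi : ⟪g, -((1 / L) • g)⟫ = -(1 / L) * ‖g‖ ^ 2 := by
      rw [inner_neg_right, real_inner_smul_right, real_inner_self_eq_norm_sq]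
      ring
    have hn : ‖-((1 / L) • g)‖ ^ 2 = (1 / L) ^ 2 * ‖g‖ ^ 2 := by
      rw [norm_neg, norm_smul, Real.norm_eq_abs, abs_of_nonneg (by positivity : (0:ℝ) ≤ 1 / L),
        mul_pow]
    rw [hi, hn] at hd
    have hd2 : f (z - (1 / L) • g) ≤ f z - 1 / (2 * L) * ‖g‖ ^ 2 := by
      have : -(1 / L) * ‖g‖ ^ 2 + L / 2 * ((1 / L) ^ 2 * ‖g‖ ^ 2) = -(1 / (2 * L)) * ‖g‖ ^ 2 := by
        field_simp; ring
      nlinarith [hd]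
    have hPLz := hPL z
    have h1L : (0:ℝ) < 1 / (2 * L) := by positivity
    have : f (z - (1 / L) • g) - f xstar ≤ (f z - f xstar) - 1 / (2 * L) * (2 * α * (f z - f xstar)) := by
      have := mul_le_mul_of_nonneg_left hPLz h1L.le
      linarith [hd2]
    rw [hiter n]
    calc f (z - (1 / L) • g) - f xstar
        ≤ (f z - f xstar) - 1 / (2 * L) * (2 * α * (f z - f xstar)) := this
      _ = (1 - α / L) * (f z - f xstar) := by field_simp
  -- induction
  intro n
  induction n with
  | zero => simp
  | succ n ih =>
    have hfac : (0:ℝ) ≤ 1 - α / L := by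
      rw [sub_nonneg, div_le_one hL]; exact hαL
    calc f (x (n + 1)) - f xstar ≤ (1 - α / L) * (f (x n) - f xstar) := hstep n
      _ ≤ (1 - α / L) * ((1 - α / L) ^ n * (f (x 0) - f xstar)) :=
          mul_le_mul_of_nonneg_left ih hfac
      _ = (1 - α / L) ^ (n + 1) * (f (x 0) - f xstar) := by ring
end

section
/- Let f : E → ℝ ∪ {+∞} be proper, convex, lower semicontinuous. Then prox_f is firmly nonexpansive: for all x, y, ‖prox_f(x) - prox_f(y)‖² + ‖(x - prox_f(x)) - (y - prox_f(y))‖² ≤ ‖x - y‖². In particular prox_f and Id - prox_f are 1-Lipschitz. -/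
lemma stmt_14_small_t {A c : ℝ} (hc : 0 ≤ c) (h : ∀ t : ℝ, 0 < t → t ≤ 1 → A ≤ t * c) :
    A ≤ 0 := by
  by_contra hA
  push_neg at hA
  rcases eq_or_lt_of_le hc with h0 | h0
  · have := h 1 one_pos le_rfl
    rw [← h0] at this; linarith
  · have hmin : (0:ℝ) < min 1 (A / (2 * c)) := lt_min one_pos (by positivity)
    have ht := h (min 1 (A / (2 * c))) hmin (min_le_left _ _)
    have h2 : min 1 (A / (2 * c)) * c ≤ A / 2 := by
      calc min 1 (A / (2 * c)) * c ≤ (A / (2 * c)) * c :=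
            mul_le_mul_of_nonneg_right (min_le_right _ _) hc
        _ = A / 2 := by field_simp
    linarith

/-- The proximal operator of a proper convex lsc function is firmly nonexpansive,
hence `prox_f` and `Id - prox_f` are 1-Lipschitz. -/
theorem stmt_14 {E : Type*} [NormedAddCommGroup E] [InnerProductSpace ℝ E]
    [FiniteDimensional ℝ E]
    (f : E → EReal)
    (hproper : (∃ x, f x ≠ ⊤) ∧ ∀ x, f x ≠ ⊥)
    (hconvex : ∀ x y : E, ∀ a b : ℝ, 0 ≤ a → 0 ≤ b → a + b = 1 →
      f (a • x + b • y) ≤ (a : EReal) * f x + (b : EReal) * f y)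
    (hlsc : LowerSemicontinuous f)
    (x y p q : E)
    (hp : ∀ z : E, f p + ((‖x - p‖ ^ 2 / 2 : ℝ) : EReal)
        ≤ f z + ((‖x - z‖ ^ 2 / 2 : ℝ) : EReal))
    (hq : ∀ z : E, f q + ((‖y - q‖ ^ 2 / 2 : ℝ) : EReal)
        ≤ f z + ((‖y - z‖ ^ 2 / 2 : ℝ) : EReal)) :
    ‖p - q‖ ^ 2 + ‖(x - p) - (y - q)‖ ^ 2 ≤ ‖x - y‖ ^ 2 ∧
    ‖p - q‖ ≤ ‖x - y‖ ∧ ‖(x - p) - (y - q)‖ ≤ ‖x - y‖ := by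
  obtain ⟨⟨z0, hz0⟩, hbot⟩ := hproper
  obtain ⟨c0, hc0⟩ : ∃ c : ℝ, f z0 = (c : EReal) :=
    ⟨(f z0).toReal, (EReal.coe_toReal hz0 (hbot z0)).symm⟩
  have hpt : f p ≠ ⊤ := by
    intro h
    have h1 := hp z0
    rw [h, hc0, EReal.top_add_of_ne_bot (EReal.coe_ne_bot _), ← EReal.coe_add, top_le_iff] at h1
    exact EReal.coe_ne_top _ h1
  have hqt : f q ≠ ⊤ := by
    intro h
    have h1 := hq z0
    rw [h, hc0, EReal.top_add_of_ne_bot (EReal.coe_ne_bot _), ← EReal.coe_add, top_le_iff] at h1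
    exact EReal.coe_ne_top _ h1
  obtain ⟨a, ha⟩ : ∃ a : ℝ, f p = (a : EReal) :=
    ⟨(f p).toReal, (EReal.coe_toReal hpt (hbot p)).symm⟩
  obtain ⟨b, hb⟩ : ∃ b : ℝ, f q = (b : EReal) :=
    ⟨(f q).toReal, (EReal.coe_toReal hqt (hbot q)).symm⟩
  -- Subgradient inequality scheme: for a minimizer m of f(z) + ‖w - z‖²/2 with value v,
  -- and target z with value vz, one gets ⟪w - m, z - m⟫ ≤ vz - v.
  have subgrad : ∀ (w m z : E) (v vz : ℝ), f m = (v : EReal) → f z = (vz : EReal) →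
      (∀ u : E, f m + ((‖w - m‖ ^ 2 / 2 : ℝ) : EReal) ≤ f u + ((‖w - u‖ ^ 2 / 2 : ℝ) : EReal)) →
      (inner ℝ (w - m) (z - m) : ℝ) ≤ vz - v := by
    intro w m z v vz hv hvz hmin
    have key : ∀ t : ℝ, 0 < t → t ≤ 1 →
        (inner ℝ (w - m) (z - m) : ℝ) - (vz - v) ≤ t * (‖z - m‖ ^ 2 / 2) := by
      intro t ht ht1
      have hcomb : (1 - t) • m + t • z = m + t • (z - m) := by
        rw [smul_sub, sub_smul, one_smul]; abel
      have hcv := hconvex m z (1 - t) t (by linarith) ht.le (by ring)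
      rw [hcomb, hv, hvz] at hcv
      have hcv' : f (m + t • (z - m)) ≤ (((1 - t) * v + t * vz : ℝ) : EReal) := by
        rw [EReal.coe_add, EReal.coe_mul, EReal.coe_mul]; exact hcv
      have hm := hmin (m + t • (z - m))
      rw [hv] at hm
      have hchain : ((v + ‖w - m‖ ^ 2 / 2 : ℝ) : EReal)
          ≤ (((1 - t) * v + t * vz + ‖w - (m + t • (z - m))‖ ^ 2 / 2 : ℝ) : EReal) := by
        rw [EReal.coe_add, EReal.coe_add]
        refine hm.trans ?_
        exact add_le_add_left hcv' _
      rw [EReal.coe_le_coe_iff] at hchain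
      have hnorm : ‖w - (m + t • (z - m))‖ ^ 2
          = ‖w - m‖ ^ 2 - 2 * t * (inner ℝ (w - m) (z - m) : ℝ) + t ^ 2 * ‖z - m‖ ^ 2 := by
        have : w - (m + t • (z - m)) = (w - m) - t • (z - m) := by abel
        rw [this, @norm_sub_sq_real, real_inner_smul_right, norm_smul]
        simp [mul_pow, sq_abs]
        ring
      rw [hnorm] at hchain
      nlinarith [sq_nonneg t, ht]
    have := stmt_14_small_t (by positivity) key
    linarith
  have h1 := subgrad x p q a b ha hb hp
  have h2 := subgrad y q p b a hb ha hq
  -- Sum: ⟪(x - p) - (y - q), q - p⟫ ≤ 0, i.e. ‖p - q‖² ≤ ⟪x - y, p - q⟫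
  have hkey : ‖p - q‖ ^ 2 ≤ (inner ℝ (x - y) (p - q) : ℝ) := by
    have e1 : (inner ℝ (x - p) (q - p) : ℝ) = inner ℝ x q - inner ℝ x p - inner ℝ p q + inner ℝ p p := by
      simp [inner_sub_left, inner_sub_right]; ring
    have e2 : (inner ℝ (y - q) (p - q) : ℝ) = inner ℝ y p - inner ℝ y q - inner ℝ q p + inner ℝ q q := by
      simp [inner_sub_left, inner_sub_right]; ring
    have e3 : (inner ℝ (x - y) (p - q) : ℝ) = inner ℝ x p - inner ℝ x q - inner ℝ y p + inner ℝ y q := by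
      simp [inner_sub_left, inner_sub_right]; ring
    have e4 : ‖p - q‖ ^ 2 = (inner ℝ p p : ℝ) - inner ℝ p q - inner ℝ q p + inner ℝ q q := by
      rw [← real_inner_self_eq_norm_sq]
      rw [inner_sub_left, inner_sub_right, inner_sub_right]; ring
    rw [e3, e4]
    linarith
  have hsq : ‖p - q‖ ^ 2 + ‖(x - p) - (y - q)‖ ^ 2 ≤ ‖x - y‖ ^ 2 := by
    have hre : (x - p) - (y - q) = (x - y) - (p - q) := by abel
    rw [hre]
    nlinarith [hkey, @norm_sub_sq_real _ _ _ (x - y) (p - q)]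
  refine ⟨hsq, ?_, ?_⟩
  · nlinarith [norm_nonneg (p - q), norm_nonneg (x - y), sq_nonneg ‖(x - p) - (y - q)‖]
  · nlinarith [norm_nonneg ((x - p) - (y - q)), norm_nonneg (x - y), sq_nonneg ‖p - q‖]
end

section
/- Let f be a proper, lower semicontinuous, α-strongly convex function on E with α > 0, and let γ > 0. Then prox_{γf} is (1/(1 + αγ))-Lipschitz; more precisely, ⟨prox_{γf}(x) - prox_{γf}(y), x - y⟩ ≥ (1 + γα)‖prox_{γf}(x) - prox_{γf}(y)‖² for all x, y. -/
open scoped RealInnerProductSpace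

set_option maxHeartbeats 800000 in
/-- The proximal operator of an `α`-strongly convex function is a
`1/(1+αγ)`-Lipschitz contraction. -/
theorem stmt_15 {E : Type*} [NormedAddCommGroup E] [InnerProductSpace ℝ E]
    [FiniteDimensional ℝ E]
    (f : E → EReal) (α γ : ℝ) (hα : 0 < α) (hγ : 0 < γ)
    (hproper : (∃ x, f x ≠ ⊤) ∧ ∀ x, f x ≠ ⊥)
    (hlsc : LowerSemicontinuous f)
    (hsc : ∀ x y : E, ∀ a b : ℝ, 0 ≤ a → 0 ≤ b → a + b = 1 →
      f (a • x + b • y) + ((a * b * α / 2 * ‖x - y‖ ^ 2 : ℝ) : EReal)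
        ≤ (a : EReal) * f x + (b : EReal) * f y)
    (x y p q : E)
    (hp : ∀ z : E, (γ : EReal) * f p + ((‖x - p‖ ^ 2 / 2 : ℝ) : EReal)
        ≤ (γ : EReal) * f z + ((‖x - z‖ ^ 2 / 2 : ℝ) : EReal))
    (hq : ∀ z : E, (γ : EReal) * f q + ((‖y - q‖ ^ 2 / 2 : ℝ) : EReal)
        ≤ (γ : EReal) * f z + ((‖y - z‖ ^ 2 / 2 : ℝ) : EReal)) :
    ⟪p - q, x - y⟫ ≥ (1 + γ * α) * ‖p - q‖ ^ 2 ∧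
    ‖p - q‖ ≤ (1 / (1 + α * γ)) * ‖x - y‖ := by
  obtain ⟨⟨z0, hz0⟩, hbot⟩ := hproper
  have hz0' : f z0 = ((f z0).toReal : EReal) := (EReal.coe_toReal hz0 (hbot z0)).symm
  -- f p and f q are finite
  have hfpt : f p ≠ ⊤ := by
    intro h
    have h1 := hp z0
    rw [h, EReal.coe_mul_top_of_pos hγ, EReal.top_add_coe, hz0'] at h1
    have h2 := top_le_iff.mp h1
    rw [show ((γ : EReal) * ((f z0).toReal : EReal) + ((‖x - z0‖ ^ 2 / 2 : ℝ) : EReal))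
        = ((γ * (f z0).toReal + ‖x - z0‖ ^ 2 / 2 : ℝ) : EReal) by push_cast; ring] at h2
    exact EReal.coe_ne_top _ h2
  have hfqt : f q ≠ ⊤ := by
    intro h
    have h1 := hq z0
    rw [h, EReal.coe_mul_top_of_pos hγ, EReal.top_add_coe, hz0'] at h1
    have h2 := top_le_iff.mp h1
    rw [show ((γ : EReal) * ((f z0).toReal : EReal) + ((‖y - z0‖ ^ 2 / 2 : ℝ) : EReal))
        = ((γ * (f z0).toReal + ‖y - z0‖ ^ 2 / 2 : ℝ) : EReal) by push_cast; ring] at h2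
    exact EReal.coe_ne_top _ h2
  set fp := (f p).toReal with hfp_def
  set fq := (f q).toReal with hfq_def
  have hfp : f p = (fp : EReal) := (EReal.coe_toReal hfpt (hbot p)).symm
  have hfq : f q = (fq : EReal) := (EReal.coe_toReal hfqt (hbot q)).symm
  set N := ‖p - q‖ ^ 2 with hN
  set A := (⟪p - q, x - y⟫ : ℝ) with hA
  have hNnn : 0 ≤ N := sq_nonneg _
  -- key inequality for each t ∈ (0,1)
  have key : ∀ t : ℝ, 0 < t → t < 1 → (1 - t) * (1 + γ * α) * N ≤ A := by
    intro t ht ht1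
    have ha : (0:ℝ) ≤ 1 - t := by linarith
    have hab : (1 - t) + t = 1 := by ring
    have h1 := hsc p q (1 - t) t ha ht.le hab
    have h2 := hsc q p (1 - t) t ha ht.le hab
    set z1 := (1 - t) • p + t • q with hz1_def
    set z2 := (1 - t) • q + t • p with hz2_def
    -- f z1, f z2 finite
    have hz1t : f z1 ≠ ⊤ := by
      intro h
      rw [h, EReal.top_add_coe, hfp, hfq] at h1
      have h2' := top_le_iff.mp h1
      rw [show (((1 - t : ℝ) : EReal) * (fp : EReal) + ((t:ℝ) : EReal) * (fq : EReal))
          = (((1 - t) * fp + t * fq : ℝ) : EReal) by push_cast; ring] at h2'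
      exact EReal.coe_ne_top _ h2'
    have hz2t : f z2 ≠ ⊤ := by
      intro h
      rw [h, EReal.top_add_coe, hfp, hfq] at h2
      have h2' := top_le_iff.mp h2
      rw [show (((1 - t : ℝ) : EReal) * (fq : EReal) + ((t:ℝ) : EReal) * (fp : EReal))
          = (((1 - t) * fq + t * fp : ℝ) : EReal) by push_cast; ring] at h2'
      exact EReal.coe_ne_top _ h2'
    set fz1 := (f z1).toReal with hfz1_def
    set fz2 := (f z2).toReal with hfz2_def
    have hfz1 : f z1 = (fz1 : EReal) := (EReal.coe_toReal hz1t (hbot z1)).symm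
    have hfz2 : f z2 = (fz2 : EReal) := (EReal.coe_toReal hz2t (hbot z2)).symm
    -- real versions
    have H1 : fz1 + (1 - t) * t * α / 2 * ‖p - q‖ ^ 2 ≤ (1 - t) * fp + t * fq := by
      rw [hfz1, hfp, hfq] at h1; exact_mod_cast h1
    have H2 : fz2 + (1 - t) * t * α / 2 * ‖q - p‖ ^ 2 ≤ (1 - t) * fq + t * fp := by
      rw [hfz2, hfq, hfp] at h2; exact_mod_cast h2
    have H3 : γ * fp + ‖x - p‖ ^ 2 / 2 ≤ γ * fz1 + ‖x - z1‖ ^ 2 / 2 := by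
      have := hp z1; rw [hfp, hfz1] at this; exact_mod_cast this
    have H4 : γ * fq + ‖y - q‖ ^ 2 / 2 ≤ γ * fz2 + ‖y - z2‖ ^ 2 / 2 := by
      have := hq z2; rw [hfq, hfz2] at this; exact_mod_cast this
    have hqp : ‖q - p‖ = ‖p - q‖ := norm_sub_rev q p
    -- norm expansions
    have e1 : ‖x - z1‖ ^ 2 = ‖x - p‖ ^ 2 + 2 * (t * ⟪x - p, p - q⟫) + t ^ 2 * ‖p - q‖ ^ 2 := by
      have hxz : x - z1 = (x - p) + t • (p - q) := by rw [hz1_def]; module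
      rw [hxz, norm_add_sq_real, real_inner_smul_right, norm_smul, mul_pow, Real.norm_eq_abs,
        sq_abs]
    have e2 : ‖y - z2‖ ^ 2 = ‖y - q‖ ^ 2 - 2 * (t * ⟪y - q, p - q⟫) + t ^ 2 * ‖p - q‖ ^ 2 := by
      have hyz : y - z2 = (y - q) - t • (p - q) := by rw [hz2_def]; module
      rw [hyz, norm_sub_sq_real, real_inner_smul_right, norm_smul, mul_pow, Real.norm_eq_abs,
        sq_abs]
    have hv : (x - p) - (y - q) = (x - y) - (p - q) := by abel
    have einner : ⟪x - p, p - q⟫ - ⟪y - q, p - q⟫ = A - N := by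
      rw [hA, hN, ← real_inner_self_eq_norm_sq, ← inner_sub_left, hv, inner_sub_left,
        real_inner_comm (p - q) (x - y)]
    rw [hqp] at H2
    rw [← hN] at H1 H2 e1 e2
    -- combine, dividing by t
    have G1 := mul_le_mul_of_nonneg_left H1 hγ.le
    have G2 := mul_le_mul_of_nonneg_left H2 hγ.le
    have einnt : t * (⟪x - p, p - q⟫ - ⟪y - q, p - q⟫) = t * (A - N) := by rw [einner]
    have hcomb : t * (γ * (1 - t) * α * N - (A - N) - t * N) ≤ 0 := by
      nlinarith [G1, G2, H3, H4, e1, e2, einnt]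
    have hdiv : γ * (1 - t) * α * N - (A - N) - t * N ≤ 0 := by
      by_contra h
      push_neg at h
      have := mul_pos ht h
      linarith
    have hre : (1 - t) * (1 + γ * α) * N = γ * (1 - t) * α * N + N - t * N := by ring
    rw [hre]
    linarith [hdiv]
  have part1 : A ≥ (1 + γ * α) * N := by
    rcases eq_or_ne p q with hpq | hpq
    · simp [hA, hN, hpq]
    · have hnpos : 0 < ‖p - q‖ := norm_sub_pos_iff.mpr hpq
      have hNpos : 0 < N := by rw [hN]; positivity
      have hC : 0 < (1 + γ * α) * N := by
        have : (0:ℝ) < 1 + γ * α := by nlinarith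
        exact mul_pos this hNpos
      refine le_of_forall_sub_le ?_
      intro ε hε
      set t := min (ε / ((1 + γ * α) * N)) (1/2) with ht_def
      have ht : 0 < t := lt_min (div_pos hε hC) (by norm_num)
      have ht1 : t < 1 := lt_of_le_of_lt (min_le_right _ _) (by norm_num)
      have hk := key t ht ht1
      have htc : t * ((1 + γ * α) * N) ≤ ε := by
        have h' : t ≤ ε / ((1 + γ * α) * N) := min_le_left _ _
        calc t * ((1 + γ * α) * N) ≤ ε / ((1 + γ * α) * N) * ((1 + γ * α) * N) :=
              mul_le_mul_of_nonneg_right h' hC.le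
          _ = ε := div_mul_cancel₀ _ hC.ne'
      nlinarith [hk, htc]
  refine ⟨part1, ?_⟩
  have hcs : A ≤ ‖p - q‖ * ‖x - y‖ := real_inner_le_norm _ _
  have hpos : (0:ℝ) < 1 + α * γ := by nlinarith
  rcases eq_or_ne p q with hpq | hpq
  · rw [hpq]
    simp only [sub_self, norm_zero]
    positivity
  · have hnpos : 0 < ‖p - q‖ := norm_sub_pos_iff.mpr hpq
    have h5 : (1 + γ * α) * ‖p - q‖ ≤ ‖x - y‖ := by
      have hNN : (1 + γ * α) * N = ((1 + γ * α) * ‖p - q‖) * ‖p - q‖ := by rw [hN]; ring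
      nlinarith [part1, hcs, hnpos]
    rw [one_div, inv_mul_eq_div, le_div_iff₀ hpos]
    nlinarith [h5]
end

section
/- Krasnosel'skii–Mann: Let D ⊆ E be nonempty closed convex, T : D → D nonexpansive with a fixed point, (λₙ) a sequence in [0,1] with Σ λₙ(1 - λₙ) = +∞, and x₀ ∈ D. Define xₙ₊₁ = xₙ + λₙ(T(xₙ) - xₙ). Then (xₙ) converges to a fixed point of T. -/
open Filter Topology

/-- Krasnosel'skii–Mann iteration converges to a fixed point of a nonexpansive map. -/
theorem stmt_17 {E : Type*} [NormedAddCommGroup E] [InnerProductSpace ℝ E]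
    [FiniteDimensional ℝ E]
    (D : Set E) (hDne : D.Nonempty) (hDc : IsClosed D) (hDconv : Convex ℝ D)
    (T : E → E) (hmaps : Set.MapsTo T D D)
    (hne : ∀ x ∈ D, ∀ y ∈ D, ‖T x - T y‖ ≤ ‖x - y‖)
    (hfix : ∃ z ∈ D, T z = z)
    (lam : ℕ → ℝ) (hlam : ∀ n, lam n ∈ Set.Icc (0 : ℝ) 1)
    (hdiv : Tendsto (fun N => ∑ n ∈ Finset.range N, lam n * (1 - lam n)) atTop atTop)
    (x : ℕ → E) (hx0 : x 0 ∈ D)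
    (hiter : ∀ n, x (n + 1) = x n + lam n • (T (x n) - x n)) :
    ∃ z ∈ D, T z = z ∧ Tendsto x atTop (𝓝 z) := by
  obtain ⟨z₀, hz₀D, hz₀⟩ := hfix
  -- the iterates stay in D
  have hxD : ∀ n, x n ∈ D := by
    intro n
    induction n with
    | zero => exact hx0
    | succ n ih =>
      have h := hDconv ih (hmaps ih) (a := 1 - lam n) (b := lam n)
        (by linarith [(hlam n).2]) (hlam n).1 (by ring)
      rw [hiter]
      convert h using 1
      module
  -- key inequality
  have hkey : ∀ z ∈ D, T z = z → ∀ n,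
      ‖x (n+1) - z‖^2 ≤ ‖x n - z‖^2 - lam n * (1 - lam n) * ‖T (x n) - x n‖^2 := by
    intro z hzD hz n
    have hab : x (n+1) - z = (1 - lam n) • (x n - z) + lam n • (T (x n) - z) := by
      rw [hiter]; module
    have hb : ‖T (x n) - z‖ ≤ ‖x n - z‖ := by
      have := hne (x n) (hxD n) z hzD
      rwa [hz] at this
    have hsub : T (x n) - x n = -((x n - z) - (T (x n) - z)) := by module
    set a := x n - z with ha
    set b := T (x n) - z with hbdef
    set t := lam n with ht
    rw [hab, hsub, norm_neg]
    clear_value a b t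
    have e1 := norm_add_sq_real ((1 - t) • a) (t • b)
    have e2 := norm_sub_sq_real a b
    rw [norm_smul, norm_smul, real_inner_smul_left, real_inner_smul_right] at e1
    have ht0 : (0:ℝ) ≤ t := ht ▸ (hlam n).1
    have ht1 : t ≤ 1 := ht ▸ (hlam n).2
    have h0a : (0:ℝ) ≤ 1 - t := by linarith
    rw [Real.norm_eq_abs, Real.norm_eq_abs, abs_of_nonneg h0a, abs_of_nonneg ht0] at e1
    have hBA : ‖b‖^2 ≤ ‖a‖^2 := pow_le_pow_left₀ (norm_nonneg _) hb 2
    rw [e1, e2]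
    nlinarith [mul_nonneg ht0 (sub_nonneg.mpr hBA)]
  -- Fejér monotonicity
  have hmono : ∀ z ∈ D, T z = z → ∀ n m, n ≤ m → ‖x m - z‖ ≤ ‖x n - z‖ := by
    intro z hzD hz
    have hstep : ∀ n, ‖x (n+1) - z‖ ≤ ‖x n - z‖ := by
      intro n
      have h := hkey z hzD hz n
      have hnn : 0 ≤ lam n * (1 - lam n) * ‖T (x n) - x n‖^2 :=
        mul_nonneg (mul_nonneg (hlam n).1 (by linarith [(hlam n).2])) (sq_nonneg _)
      nlinarith [norm_nonneg (x (n+1) - z), norm_nonneg (x n - z)]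
    intro n m hnm
    have hanti : Antitone fun n => ‖x n - z‖ := antitone_nat_of_succ_le hstep
    exact hanti hnm
  -- partial sums of residuals are bounded
  have hsum : ∀ N, (∑ n ∈ Finset.range N, lam n * (1 - lam n) * ‖T (x n) - x n‖^2)
      + ‖x N - z₀‖^2 ≤ ‖x 0 - z₀‖^2 := by
    intro N
    induction N with
    | zero => simp
    | succ N ih =>
      rw [Finset.sum_range_succ]
      have := hkey z₀ hz₀D hz₀ N
      linarith
  -- the residual is antitone
  have hrstep : ∀ n, ‖T (x (n+1)) - x (n+1)‖ ≤ ‖T (x n) - x n‖ := by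
    intro n
    have h1 : x (n+1) - x n = lam n • (T (x n) - x n) := by rw [hiter]; abel
    have h2 : T (x n) - x (n+1) = (1 - lam n) • (T (x n) - x n) := by rw [hiter]; module
    have h3 : ‖T (x (n+1)) - x (n+1)‖ ≤ ‖T (x (n+1)) - T (x n)‖ + ‖T (x n) - x (n+1)‖ :=
      norm_sub_le_norm_sub_add_norm_sub _ _ _
    have h4 : ‖T (x (n+1)) - T (x n)‖ ≤ ‖x (n+1) - x n‖ :=
      hne _ (hxD (n+1)) _ (hxD n)
    rw [h1] at h4
    rw [h2] at h3
    rw [norm_smul, Real.norm_eq_abs, abs_of_nonneg (hlam n).1] at h4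
    rw [norm_smul, Real.norm_eq_abs,
      abs_of_nonneg (by linarith [(hlam n).2] : (0:ℝ) ≤ 1 - lam n)] at h3
    nlinarith
  have hranti : Antitone (fun n => ‖T (x n) - x n‖) := antitone_nat_of_succ_le hrstep
  -- residual tends to zero
  have hrS : ∀ N, ‖T (x N) - x N‖^2 * (∑ n ∈ Finset.range N, lam n * (1 - lam n))
      ≤ ‖x 0 - z₀‖^2 := by
    intro N
    rw [Finset.mul_sum]
    calc (∑ n ∈ Finset.range N, ‖T (x N) - x N‖^2 * (lam n * (1 - lam n)))
        ≤ ∑ n ∈ Finset.range N, lam n * (1 - lam n) * ‖T (x n) - x n‖^2 := by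
          apply Finset.sum_le_sum
          intro n hn
          rw [mul_comm]
          apply mul_le_mul_of_nonneg_left _
            (mul_nonneg (hlam n).1 (by linarith [(hlam n).2]))
          exact pow_le_pow_left₀ (norm_nonneg _)
            (hranti (le_of_lt (Finset.mem_range.mp hn))) 2
      _ ≤ ‖x 0 - z₀‖^2 := by
          have := hsum N
          nlinarith [sq_nonneg ‖x N - z₀‖]
  have hdivz : Tendsto (fun N => ‖x 0 - z₀‖^2 /
      ∑ n ∈ Finset.range N, lam n * (1 - lam n)) atTop (𝓝 0) :=
    Tendsto.div_atTop tendsto_const_nhds hdiv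
  have hsq0 : Tendsto (fun N => ‖T (x N) - x N‖^2) atTop (𝓝 0) := by
    apply squeeze_zero' (Eventually.of_forall fun N => sq_nonneg _) ?_ hdivz
    filter_upwards [hdiv.eventually_ge_atTop 1] with N hN
    rw [le_div_iff₀ (by linarith)]
    exact hrS N
  have hr0 : Tendsto (fun N => ‖T (x N) - x N‖) atTop (𝓝 0) := by
    have h := (Real.continuous_sqrt.tendsto' 0 0 Real.sqrt_zero).comp hsq0
    have heq : (fun N => Real.sqrt (‖T (x N) - x N‖^2)) = fun N => ‖T (x N) - x N‖ :=
      funext fun N => Real.sqrt_sq (norm_nonneg _)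
    rwa [Function.comp_def, heq] at h
  -- Bolzano–Weierstrass
  have hbdd : ∀ n, x n ∈ Metric.closedBall z₀ ‖x 0 - z₀‖ := by
    intro n
    rw [Metric.mem_closedBall, dist_eq_norm]
    exact hmono z₀ hz₀D hz₀ 0 n (Nat.zero_le n)
  obtain ⟨z', hz'mem, φ, hφmono, hφ⟩ :=
    (isCompact_closedBall z₀ ‖x 0 - z₀‖).tendsto_subseq hbdd
  have hz'D : z' ∈ D := hDc.mem_of_tendsto hφ (Eventually.of_forall fun n => hxD (φ n))
  -- z' is a fixed point
  have hTz' : T z' = z' := by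
    have h1 : Tendsto (fun n => T (x (φ n))) atTop (𝓝 (T z')) := by
      rw [tendsto_iff_norm_sub_tendsto_zero]
      apply squeeze_zero (fun n => norm_nonneg _) (fun n => hne _ (hxD (φ n)) z' hz'D)
      exact (tendsto_iff_norm_sub_tendsto_zero).mp hφ
    have h2 : Tendsto (fun n => T (x (φ n)) - x (φ n)) atTop (𝓝 (T z' - z')) := h1.sub hφ
    have h3 : Tendsto (fun n => T (x (φ n)) - x (φ n)) atTop (𝓝 0) :=
      tendsto_zero_iff_norm_tendsto_zero.mpr (hr0.comp hφmono.tendsto_atTop)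
    exact sub_eq_zero.mp (tendsto_nhds_unique h2 h3)
  refine ⟨z', hz'D, hTz', ?_⟩
  rw [Metric.tendsto_atTop]
  intro ε hε
  obtain ⟨K, hK⟩ := Metric.tendsto_atTop.mp hφ ε hε
  refine ⟨φ K, fun n hn => lt_of_le_of_lt ?_ (hK K le_rfl)⟩
  rw [dist_eq_norm, dist_eq_norm]
  exact hmono z' hz'D hTz' (φ K) n hn
end

section
/- Moreau's identity: Let f : E → ℝ ∪ {+∞} be proper, convex, lower semicontinuous and γ > 0. Then for all x ∈ E, prox_{γf}(x) + γ·prox_{f*/γ}(x/γ) = x, where f*(u) = sup_x ⟨x,u⟩ - f(x) is the convex conjugate. -/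
open scoped RealInnerProductSpace

/-- Moreau's identity: `prox_{γf}(x) + γ prox_{f*/γ}(x/γ) = x`. -/
theorem stmt_18 {E : Type*} [NormedAddCommGroup E] [InnerProductSpace ℝ E]
    [FiniteDimensional ℝ E]
    (f : E → EReal) (γ : ℝ) (hγ : 0 < γ)
    (hproper : (∃ x, f x ≠ ⊤) ∧ ∀ x, f x ≠ ⊥)
    (hconvex : ∀ x y : E, ∀ a b : ℝ, 0 ≤ a → 0 ≤ b → a + b = 1 →
      f (a • x + b • y) ≤ (a : EReal) * f x + (b : EReal) * f y)
    (hlsc : LowerSemicontinuous f)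
    (fstar : E → EReal)
    (hfstar : ∀ u, fstar u = ⨆ z : E, ((⟪z, u⟫ : ℝ) : EReal) - f z)
    (x p q : E)
    (hp : ∀ z : E, (γ : EReal) * f p + ((‖x - p‖ ^ 2 / 2 : ℝ) : EReal)
        ≤ (γ : EReal) * f z + ((‖x - z‖ ^ 2 / 2 : ℝ) : EReal))
    (hq : ∀ z : E, ((1 / γ : ℝ) : EReal) * fstar q
          + ((‖(1 / γ) • x - q‖ ^ 2 / 2 : ℝ) : EReal)
        ≤ ((1 / γ : ℝ) : EReal) * fstar z
          + ((‖(1 / γ) • x - z‖ ^ 2 / 2 : ℝ) : EReal)) :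
    p + γ • q = x := by
  have hγ' : (γ : ℝ) ≠ 0 := ne_of_gt hγ
  have hγinv : (0:ℝ) < 1/γ := by positivity
  obtain ⟨⟨x₀, hx₀⟩, hbot⟩ := hproper
  set q₀ : E := γ⁻¹ • (x - p) with hq₀def
  -- f p is real
  have hfp_ne_top : f p ≠ ⊤ := by
    intro h
    have h1 := hp x₀
    rw [h, (EReal.coe_toReal hx₀ (hbot x₀)).symm, EReal.coe_mul_top_of_pos hγ,
      ← EReal.coe_mul, ← EReal.coe_add, EReal.top_add_coe, top_le_iff] at h1
    exact EReal.coe_ne_top _ h1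
  set fp : ℝ := (f p).toReal with hfpdef
  have hfp : f p = (fp : EReal) := (EReal.coe_toReal hfp_ne_top (hbot p)).symm
  -- Key subgradient lemma: f z ≥ fp + ⟪q₀, z - p⟫
  have hA : ∀ z : E, ((fp + ⟪q₀, z - p⟫ : ℝ) : EReal) ≤ f z := by
    intro z
    rcases eq_or_ne (f z) ⊤ with h | h
    · rw [h]; exact le_top
    set fz : ℝ := (f z).toReal with hfzdef
    have hfz : f z = (fz : EReal) := (EReal.coe_toReal h (hbot z)).symm
    rw [hfz, EReal.coe_le_coe_iff]
    -- step inequality for each t ∈ (0,1]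
    have hstep : ∀ t : ℝ, 0 < t → t ≤ 1 →
        ⟪x - p, z - p⟫ - t * (‖z - p‖ ^ 2 / 2) ≤ γ * fz - γ * fp := by
      intro t ht ht1
      set pt : E := (1 - t) • p + t • z with hptdef
      have hconv0 := hconvex p z (1 - t) t (by linarith) ht.le (by ring)
      rw [hfp, hfz] at hconv0
      have hub : f pt ≤ (((1 - t) * fp + t * fz : ℝ) : EReal) := by
        rw [EReal.coe_add, EReal.coe_mul, EReal.coe_mul]
        exact hconv0
      have hpt_ne_top : f pt ≠ ⊤ := by
        intro htop; rw [htop, top_le_iff] at hub; exact EReal.coe_ne_top _ hub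
      set fpt : ℝ := (f pt).toReal with hfptdef
      have hfpt : f pt = (fpt : EReal) := (EReal.coe_toReal hpt_ne_top (hbot pt)).symm
      rw [hfpt, EReal.coe_le_coe_iff] at hub
      have hconv : fpt ≤ (1 - t) * fp + t * fz := hub
      have h4 := hp pt
      rw [hfp, hfpt, ← EReal.coe_mul, ← EReal.coe_mul, ← EReal.coe_add,
        ← EReal.coe_add, EReal.coe_le_coe_iff] at h4
      -- expand ‖x - pt‖²
      have h6 : x - pt = (x - p) - t • (z - p) := by rw [hptdef]; module
      have h7 : ‖x - pt‖ ^ 2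
          = ‖x - p‖ ^ 2 - 2 * (t * ⟪x - p, z - p⟫) + t ^ 2 * ‖z - p‖ ^ 2 := by
        rw [h6, norm_sub_sq_real, real_inner_smul_right, norm_smul]
        rw [Real.norm_eq_abs, mul_pow, sq_abs]
      rw [h7] at h4
      have hmul : t * (γ * fp) ≤ t * (γ * fz - ⟪x - p, z - p⟫ + t * (‖z - p‖ ^ 2 / 2)) := by
        nlinarith [mul_le_mul_of_nonneg_left hconv hγ.le]
      have := le_of_mul_le_mul_left hmul ht
      linarith
    have hfinal : ⟪x - p, z - p⟫ ≤ γ * fz - γ * fp := by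
      by_contra hcon
      push_neg at hcon
      set A : ℝ := ⟪x - p, z - p⟫
      set a : ℝ := γ * fz - γ * fp
      set B : ℝ := ‖z - p‖ ^ 2 / 2 with hBdef
      have hB : 0 ≤ B := by positivity
      set t : ℝ := min 1 ((A - a) / (B + 1)) with htdef
      have ht : 0 < t := lt_min one_pos (div_pos (by linarith) (by linarith))
      have ht1 : t ≤ 1 := min_le_left _ _
      have ht2 : t * (B + 1) ≤ A - a := by
        rw [← le_div_iff₀ (by linarith : (0:ℝ) < B + 1)]
        exact min_le_right _ _
      have := hstep t ht ht1
      nlinarith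
    have hinner : ⟪q₀, z - p⟫ = γ⁻¹ * ⟪x - p, z - p⟫ := by
      rw [hq₀def, real_inner_smul_left]
    have : γ⁻¹ * ⟪x - p, z - p⟫ ≤ γ⁻¹ * (γ * fz - γ * fp) :=
      mul_le_mul_of_nonneg_left hfinal (by positivity)
    rw [hinner]
    have hcancel : γ⁻¹ * (γ * fz - γ * fp) = fz - fp := by
      field_simp
    linarith [hcancel ▸ this]
  -- value of fstar at q₀
  have hlb : ∀ z : E, ((⟪p, z⟫ - fp : ℝ) : EReal) ≤ fstar z := by
    intro z
    rw [hfstar]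
    refine le_trans ?_ (le_iSup (fun w => ((⟪w, z⟫ : ℝ) : EReal) - f w) p)
    rw [hfp, ← EReal.coe_sub]
  have hval : fstar q₀ = ((⟪p, q₀⟫ - fp : ℝ) : EReal) := by
    refine le_antisymm ?_ (hlb q₀)
    rw [hfstar]
    apply iSup_le
    intro z
    rcases eq_or_ne (f z) ⊤ with h | h
    · rw [h]
      simp
    set fz : ℝ := (f z).toReal with hfzdef
    have hfz : f z = (fz : EReal) := (EReal.coe_toReal h (hbot z)).symm
    rw [hfz, ← EReal.coe_sub, EReal.coe_le_coe_iff]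
    have := hA z
    rw [hfz, EReal.coe_le_coe_iff] at this
    have hsym : ⟪q₀, z - p⟫ = ⟪z, q₀⟫ - ⟪p, q₀⟫ := by
      rw [inner_sub_right, real_inner_comm q₀ z, real_inner_comm q₀ p]
    linarith [hsym ▸ this]
  -- claim C: q₀ minimizes with quadratic growth
  have hxq : (1 / γ) • x - q₀ = γ⁻¹ • p := by
    rw [hq₀def, one_div]; module
  have hC : ∀ z : E,
      (((1/γ) * (⟪p, q₀⟫ - fp) + ‖(1/γ) • x - q₀‖ ^ 2 / 2 + ‖z - q₀‖ ^ 2 / 2 : ℝ) : EReal)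
        ≤ ((1 / γ : ℝ) : EReal) * fstar z + ((‖(1 / γ) • x - z‖ ^ 2 / 2 : ℝ) : EReal) := by
    intro z
    rcases eq_or_ne (fstar z) ⊤ with h | h
    · rw [h, EReal.coe_mul_top_of_pos hγinv]
      simp
    have hzb : fstar z ≠ ⊥ := by
      intro hb
      have := hlb z
      rw [hb, le_bot_iff] at this
      exact EReal.coe_ne_bot _ this
    set fz : ℝ := (fstar z).toReal with hfzdef
    have hfz : fstar z = (fz : EReal) := (EReal.coe_toReal h hzb).symm
    have hlbz : ⟪p, z⟫ - fp ≤ fz := by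
      have := hlb z; rw [hfz, EReal.coe_le_coe_iff] at this; exact this
    rw [hfz, ← EReal.coe_mul, ← EReal.coe_add, EReal.coe_le_coe_iff]
    -- real algebra
    have hdec : (1/γ) • x - z = γ⁻¹ • p + (q₀ - z) := by
      rw [hq₀def, one_div]; module
    have hexp : ‖(1/γ) • x - z‖ ^ 2
        = ‖γ⁻¹ • p‖ ^ 2 + 2 * (γ⁻¹ * (⟪p, q₀⟫ - ⟪p, z⟫)) + ‖q₀ - z‖ ^ 2 := by
      rw [hdec, norm_add_sq_real, real_inner_smul_left, inner_sub_right]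
    have hq0norm : ‖(1/γ) • x - q₀‖ ^ 2 = ‖γ⁻¹ • p‖ ^ 2 := by rw [hxq]
    have h1γ : (1/γ) = γ⁻¹ := one_div γ
    have hmono : (1/γ) * (⟪p, z⟫ - fp) ≤ (1/γ) * fz :=
      mul_le_mul_of_nonneg_left hlbz hγinv.le
    have hqz : ‖q₀ - z‖ ^ 2 = ‖z - q₀‖ ^ 2 := by rw [norm_sub_rev]
    rw [hexp, hq0norm]
    rw [h1γ] at hmono ⊢
    nlinarith [hqz]
  -- fstar q is real
  have hfq_ne_top : fstar q ≠ ⊤ := by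
    intro h
    have h1 := hq q₀
    rw [h, hval, EReal.coe_mul_top_of_pos hγinv, ← EReal.coe_mul, ← EReal.coe_add,
      EReal.top_add_coe, top_le_iff] at h1
    exact EReal.coe_ne_top _ h1
  have hfq_ne_bot : fstar q ≠ ⊥ := by
    intro hb
    have := hlb q
    rw [hb, le_bot_iff] at this
    exact EReal.coe_ne_bot _ this
  set fq : ℝ := (fstar q).toReal with hfqdef
  have hfq : fstar q = (fq : EReal) := (EReal.coe_toReal hfq_ne_top hfq_ne_bot).symm
  -- assemble
  have h1 := hq q₀
  rw [hfq, hval, ← EReal.coe_mul, ← EReal.coe_mul, ← EReal.coe_add, ← EReal.coe_add,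
    EReal.coe_le_coe_iff] at h1
  have h2 := hC q
  rw [hfq, ← EReal.coe_mul, ← EReal.coe_add, EReal.coe_le_coe_iff] at h2
  have hnorm : ‖q - q₀‖ ^ 2 ≤ 0 := by nlinarith
  have hqq : q = q₀ := by
    have : ‖q - q₀‖ = 0 := by nlinarith [norm_nonneg (q - q₀)]
    rwa [norm_sub_eq_zero_iff] at this
  rw [hqq, hq₀def, smul_smul, mul_inv_cancel₀ hγ', one_smul, add_sub_cancel]
end
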